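/- Let N ≥ 3 be an odd integer and u = (u_0, …, u_N) ∈ [0,1]^{N+1}. If max(R_N(u), 0) ≤ Q_{0,N}(u), then max(R_N(u), 0) ≤ Q_N(u); that is, max(R_N(u), 0) ≤ min((u_j+u_k)/2, 1 − (u_j+u_k)/2) for every pair (j,k) with 0 ≤ j,k ≤ N and j+k odd. -/

import Mathlib

open Finset

lemma card_even_range (m : ℕ) :
    ((Finset.range (2*m)).filter (fun i => Even i)).card = m := by
  induction m with
  | zero => simp
  | succ n ih =>
    have h2 : 2*(n+1) = (2*n+1)+1 := by ring
    rw [h2, Finset.range_add_one, Finset.filter_insert, if_neg (by simp [Nat.even_add_one]),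
      Finset.range_add_one, Finset.filter_insert, if_pos (by exact even_two_mul n),
      Finset.card_insert_of_notMem (by simp), ih]

lemma card_odd_range (m : ℕ) :
    ((Finset.range (2*m)).filter (fun i => ¬ Even i)).card = m := by
  have h2 := Finset.card_filter_add_card_filter_not
    (s := Finset.range (2*m)) (p := fun i => Even i)
  rw [Finset.card_range, card_even_range] at h2
  omega

lemma aux_half (N : ℕ) (hN : 3 ≤ N) (hNodd : Odd N)
    (u : ℕ → ℝ) (hu : ∀ j, j ≤ N → u j ∈ Set.Icc (0 : ℝ) 1)
    (h : ∀ j k, j ≤ N → k ≤ N → Odd (j + k) →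
      max (((N : ℝ) - 1)⁻¹ * (∑ i ∈ Finset.range (N + 1), u i - 1)) 0 ≤ (u j + u k) / 2)
    (j k : ℕ) (hj : j ≤ N) (hk : k ≤ N) (hje : Even j) (hko : Odd k) :
    max (((N : ℝ) - 1)⁻¹ * (∑ i ∈ Finset.range (N + 1), u i - 1)) 0 ≤
      1 - (u j + u k) / 2 := by
  obtain ⟨hj0, hj1⟩ := hu j hj
  obtain ⟨hk0, hk1⟩ := hu k hk
  set S : ℝ := ∑ i ∈ Finset.range (N + 1), u i with hS
  set R : ℝ := ((N : ℝ) - 1)⁻¹ * (S - 1) with hR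
  rcases le_or_gt R 0 with hR0 | hR0
  · rw [max_eq_right hR0]; linarith
  rw [max_eq_left hR0.le]
  -- basic facts
  obtain ⟨m, hm⟩ := hNodd
  have hm1 : 1 ≤ m := by omega
  have hNR : (2:ℝ) ≤ (N:ℝ) - 1 := by
    have : (3:ℝ) ≤ (N:ℝ) := by exact_mod_cast hN
    linarith
  have hSR : S - 1 = ((N:ℝ) - 1) * R := by
    rw [hR]; field_simp
  -- the even/odd split
  set E := (Finset.range (N+1)).filter (fun i => Even i) with hE
  set O := (Finset.range (N+1)).filter (fun i => ¬ Even i) with hO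
  have hcardE : E.card = m + 1 := by
    rw [hE, hm]; have : 2*m+1+1 = 2*(m+1) := by ring
    rw [this, card_even_range]
  have hcardO : O.card = m + 1 := by
    rw [hO, hm]
    have : 2*m+1+1 = 2*(m+1) := by ring
    rw [this, card_odd_range]
  have hsplit : ∑ i ∈ E, u i + ∑ i ∈ O, u i = S :=
    Finset.sum_filter_add_sum_filter_not _ _ _
  -- generic double-sum bound
  have key : ∀ (A B : Finset ℕ), A ⊆ E → B ⊆ O →
      (A.card : ℝ) * (B.card : ℝ) * (2*R) ≤
        (B.card : ℝ) * ∑ i ∈ A, u i + (A.card : ℝ) * ∑ i ∈ B, u i := by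
    intro A B hA hB
    have hle : ∀ a ∈ A, ∀ b ∈ B, 2*R ≤ u a + u b := by
      intro a ha b hb
      have haE := hA ha; have hbO := hB hb
      rw [hE, Finset.mem_filter, Finset.mem_range] at haE
      rw [hO, Finset.mem_filter, Finset.mem_range] at hbO
      have hab : Odd (a + b) := Even.add_odd haE.2 (Nat.not_even_iff_odd.mp hbO.2)
      have := h a b (by omega) (by omega) hab
      have := le_trans (le_max_left _ _) this
      linarith
    have hsum : ∑ a ∈ A, ∑ b ∈ B, (2*R) ≤ ∑ a ∈ A, ∑ b ∈ B, (u a + u b) := by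
      apply Finset.sum_le_sum; intro a ha
      apply Finset.sum_le_sum; intro b hb
      exact hle a ha b hb
    have hl : ∑ a ∈ A, ∑ b ∈ B, (2*R) = (A.card : ℝ) * ((B.card : ℝ) * (2*R)) := by
      simp [Finset.sum_const, nsmul_eq_mul]
    have hr : ∑ a ∈ A, ∑ b ∈ B, (u a + u b)
        = (B.card : ℝ) * ∑ i ∈ A, u i + (A.card : ℝ) * ∑ i ∈ B, u i := by
      simp only [Finset.sum_add_distrib, ← Finset.mul_sum, Finset.sum_const, nsmul_eq_mul]
      try ring
    rw [hl, hr] at hsum; linarith [hsum]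
  have hjE : j ∈ E := Finset.mem_filter.mpr ⟨Finset.mem_range.mpr (by omega), hje⟩
  have hkO : k ∈ O := Finset.mem_filter.mpr ⟨Finset.mem_range.mpr (by omega),
    Nat.not_even_iff_odd.mpr hko⟩
  have key1 := key E O (subset_refl E) (subset_refl O)
  have key2 := key (E.erase j) (O.erase k) (Finset.erase_subset _ _) (Finset.erase_subset _ _)
  rw [hcardE, hcardO] at key1
  rw [Finset.card_erase_of_mem hjE, Finset.card_erase_of_mem hkO, hcardE, hcardO] at key2
  have hme : m + 1 - 1 = m := by omega
  rw [hme] at key2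
  have hsumE : ∑ i ∈ E.erase j, u i = ∑ i ∈ E, u i - u j := by
    have := Finset.sum_erase_add E u hjE; linarith
  have hsumO : ∑ i ∈ O.erase k, u i = ∑ i ∈ O, u i - u k := by
    have := Finset.sum_erase_add O u hkO; linarith
  rw [hsumE, hsumO] at key2
  push_cast at key1 key2
  have hNc : (N:ℝ) = 2*(m:ℝ)+1 := by rw [hm]; push_cast; ring
  have hm1' : (1:ℝ) ≤ (m:ℝ) := by exact_mod_cast hm1
  have hA : 2*((m:ℝ)+1)*R ≤ S := by nlinarith [key1, hsplit, hm1']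
  have hB : 2*(m:ℝ)*R ≤ S - u j - u k := by nlinarith [key2, hm1']
  have hS2m : S - 1 = 2*(m:ℝ)*R := by rw [hSR, hNc]; ring
  have hRhalf : R ≤ 1/2 := by linarith
  have hjk1 : u j + u k ≤ 1 := by linarith
  linarith

/-- Let `N ≥ 3` be odd and `u ∈ [0,1]^{N+1}`. If
`max (R_N(u), 0) ≤ Q_{0,N}(u)`, i.e. `max (R_N(u), 0) ≤ (u_j+u_k)/2` for every
pair with `j+k` odd, then `max (R_N(u), 0) ≤ Q_N(u)`, i.e.
`max (R_N(u), 0) ≤ min ((u_j+u_k)/2, 1 - (u_j+u_k)/2)` for every such pair. -/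
theorem stmt_2 (N : ℕ) (hN : 3 ≤ N) (hNodd : Odd N)
    (u : ℕ → ℝ) (hu : ∀ j, j ≤ N → u j ∈ Set.Icc (0 : ℝ) 1)
    (h : ∀ j k, j ≤ N → k ≤ N → Odd (j + k) →
      max (((N : ℝ) - 1)⁻¹ * (∑ i ∈ Finset.range (N + 1), u i - 1)) 0 ≤ (u j + u k) / 2) :
    ∀ j k, j ≤ N → k ≤ N → Odd (j + k) →
      max (((N : ℝ) - 1)⁻¹ * (∑ i ∈ Finset.range (N + 1), u i - 1)) 0 ≤
        min ((u j + u k) / 2) (1 - (u j + u k) / 2) := by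
  intro j k hj hk hjk
  refine le_min (h j k hj hk hjk) ?_
  rcases Nat.even_or_odd j with hje | hjo
  · have hko : Odd k := by
      rcases Nat.even_or_odd k with hke | hko
      · exact absurd (hje.add hke) (Nat.not_even_iff_odd.mpr hjk)
      · exact hko
    exact aux_half N hN hNodd u hu h j k hj hk hje hko
  · have hke : Even k := by
      rcases Nat.even_or_odd k with hke | hko
      · exact hke
      · exact absurd hjk (by simpa using (hjo.add_odd hko))
    have := aux_half N hN hNodd u hu h k j hk hj hke hjo
    rwa [add_comm (u k) (u j)] at this
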